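/- Define C : ℝ → ℝ by C(θ) := (θ e^θ − e^θ + 1) / (θ (e^θ − 1)) for θ ≠ 0 and C(0) := 1/2. Then C is continuous on ℝ, strictly increasing on ℝ, C(θ) → 0 as θ → −∞, and C(θ) → 1 as θ → +∞; consequently C is a bijection from ℝ onto the open interval (0,1). -/

import Mathlib

open Filter Topology Set

/-- The shock-speed selection map `C(θ) = (θe^θ − e^θ + 1)/(θ(e^θ − 1))`, extended by
continuity with `C(0) = 1/2`. -/
noncomputable def shockSpeed (θ : ℝ) : ℝ :=
  if θ = 0 then 1 / 2
  else (θ * Real.exp θ - Real.exp θ + 1) / (θ * (Real.exp θ - 1))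


-- f1 t = exp t - exp (-t) - 2t
lemma hasDerivAt_f1 (t : ℝ) :
    HasDerivAt (fun t => Real.exp t - Real.exp (-t) - 2*t)
      (Real.exp t + Real.exp (-t) - 2) t := by
  have h1 := Real.hasDerivAt_exp t
  have h2 : HasDerivAt (fun t : ℝ => Real.exp (-t)) (-Real.exp (-t)) t := by
    simpa [Function.comp_def] using (Real.hasDerivAt_exp (-t)).comp t (hasDerivAt_neg t)
  have h3 : HasDerivAt (fun t : ℝ => 2*t) 2 t := by
    simpa using (hasDerivAt_id t).const_mul (2:ℝ)
  have := (h1.sub h2).sub h3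
  exact this.congr_deriv (by ring)

lemma f1_pos {t : ℝ} (ht : 0 < t) : 2*t < Real.exp t - Real.exp (-t) := by
  have hmono : StrictMonoOn (fun t => Real.exp t - Real.exp (-t) - 2*t) (Ici 0) := by
    apply strictMonoOn_of_deriv_pos (convex_Ici 0)
    · exact ((Real.continuous_exp.sub (Real.continuous_exp.comp continuous_neg)).sub
        (continuous_const.mul continuous_id)).continuousOn
    · intro x hx
      rw [interior_Ici] at hx
      rw [(hasDerivAt_f1 x).deriv]
      have h1 := Real.add_one_lt_exp (ne_of_gt hx)
      have h2 := Real.add_one_lt_exp (x := -x) (neg_ne_zero.mpr (ne_of_gt hx))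
      linarith
  have := hmono (self_mem_Ici) (le_of_lt ht) ht
  simp at this
  linarith

lemma hasDerivAt_f2 (t : ℝ) :
    HasDerivAt (fun t => Real.exp t + Real.exp (-t) - (2 + t^2))
      (Real.exp t - Real.exp (-t) - 2*t) t := by
  have h2 : HasDerivAt (fun t : ℝ => Real.exp (-t)) (-Real.exp (-t)) t := by
    simpa [Function.comp_def] using (Real.hasDerivAt_exp (-t)).comp t (hasDerivAt_neg t)
  have h3 : HasDerivAt (fun t : ℝ => 2 + t^2) (2*t) t := by
    simpa using ((hasDerivAt_pow 2 t).const_add (2:ℝ))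
  have h := ((Real.hasDerivAt_exp t).add h2).sub h3
  exact h.congr_deriv (by ring)

lemma key {θ : ℝ} (hθ : θ ≠ 0) : 2 + θ^2 < Real.exp θ + Real.exp (-θ) := by
  have main : ∀ t : ℝ, 0 < t → 2 + t^2 < Real.exp t + Real.exp (-t) := by
    intro t ht
    have hmono : StrictMonoOn (fun t => Real.exp t + Real.exp (-t) - (2 + t^2)) (Ici 0) := by
      apply strictMonoOn_of_deriv_pos (convex_Ici 0)
      · exact ((Real.continuous_exp.add (Real.continuous_exp.comp continuous_neg)).sub
          (continuous_const.add (continuous_pow 2))).continuousOn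
      · intro x hx
        rw [interior_Ici] at hx
        rw [(hasDerivAt_f2 x).deriv]
        linarith [f1_pos hx]
    have := hmono (self_mem_Ici) (le_of_lt ht) ht
    simp at this
    linarith
  rcases hθ.lt_or_gt with h | h
  · have := main (-θ) (by linarith)
    simp only [neg_neg] at this
    nlinarith [this]
  · exact main θ h


lemma denom_pos {θ : ℝ} (hθ : θ ≠ 0) : 0 < θ * (Real.exp θ - 1) := by
  rcases hθ.lt_or_gt with h | h
  · have : Real.exp θ < 1 := Real.exp_lt_one_iff.mpr h
    nlinarith
  · have : 1 < Real.exp θ := Real.one_lt_exp_iff.mpr h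
    nlinarith

lemma hasDerivAt_shock {θ : ℝ} (hθ : θ ≠ 0) :
    HasDerivAt shockSpeed
      (((Real.exp θ - 1)^2 - θ^2 * Real.exp θ) / (θ * (Real.exp θ - 1))^2) θ := by
  have hD : θ * (Real.exp θ - 1) ≠ 0 := ne_of_gt (denom_pos hθ)
  have hN : HasDerivAt (fun x => x * Real.exp x - Real.exp x + 1) (θ * Real.exp θ) θ := by
    have h := (((hasDerivAt_id θ).mul (Real.hasDerivAt_exp θ)).sub
      (Real.hasDerivAt_exp θ)).add_const 1
    exact h.congr_deriv (by simp only [id_eq]; ring)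
  have hDd : HasDerivAt (fun x => x * (Real.exp x - 1))
      ((Real.exp θ - 1) + θ * Real.exp θ) θ := by
    have h := (hasDerivAt_id θ).mul ((Real.hasDerivAt_exp θ).sub_const 1)
    exact h.congr_deriv (by simp only [id_eq]; ring)
  have h := hN.div hDd hD
  have heq : shockSpeed =ᶠ[𝓝 θ]
      fun x => (x * Real.exp x - Real.exp x + 1) / (x * (Real.exp x - 1)) := by
    filter_upwards [isOpen_ne.mem_nhds hθ] with x hx
    simp [shockSpeed, hx]
  have h2 := h.congr_of_eventuallyEq heq
  refine h2.congr_deriv ?_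
  rw [div_eq_div_iff (by positivity) (by positivity)]
  ring

lemma deriv_shock_pos {θ : ℝ} (hθ : θ ≠ 0) : 0 < deriv shockSpeed θ := by
  rw [(hasDerivAt_shock hθ).deriv]
  have hD : (0:ℝ) < (θ * (Real.exp θ - 1))^2 := pow_pos (denom_pos hθ) 2
  apply div_pos _ hD
  have h1 : Real.exp θ * Real.exp (-θ) = 1 := by
    rw [← Real.exp_add]; simp
  nlinarith [key hθ, Real.exp_pos θ, Real.exp_pos (-θ)]

lemma tendsto_slope_exp : Tendsto (fun x => (Real.exp x - 1)/x) (𝓝[≠] (0:ℝ)) (𝓝 1) := by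
  have h := hasDerivAt_iff_tendsto_slope.mp (Real.hasDerivAt_exp 0)
  rw [Real.exp_zero] at h
  apply h.congr'
  filter_upwards with x
  simp [slope_def_field, Real.exp_zero]

lemma tendsto_shock_zero : Tendsto shockSpeed (𝓝[≠] (0:ℝ)) (𝓝 (1/2)) := by
  have hg' : ∀ x : ℝ, x ≠ 0 → (Real.exp x - 1) + x * Real.exp x ≠ 0 := by
    intro x hx
    rcases hx.lt_or_gt with h | h
    · have : Real.exp x < 1 := Real.exp_lt_one_iff.mpr h
      nlinarith [Real.exp_pos x]
    · have : 1 < Real.exp x := Real.one_lt_exp_iff.mpr h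
      nlinarith [Real.exp_pos x]
  have hN : ∀ x : ℝ, HasDerivAt (fun x => x * Real.exp x - Real.exp x + 1) (x * Real.exp x) x := by
    intro x
    have h := (((hasDerivAt_id x).mul (Real.hasDerivAt_exp x)).sub
      (Real.hasDerivAt_exp x)).add_const 1
    exact h.congr_deriv (by simp only [id_eq]; ring)
  have hDd : ∀ x : ℝ, HasDerivAt (fun x => x * (Real.exp x - 1))
      ((Real.exp x - 1) + x * Real.exp x) x := by
    intro x
    have h := (hasDerivAt_id x).mul ((Real.hasDerivAt_exp x).sub_const 1)
    exact h.congr_deriv (by simp only [id_eq]; ring)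
  have hdiv : Tendsto (fun x => (x * Real.exp x) / ((Real.exp x - 1) + x * Real.exp x))
      (𝓝[≠] (0:ℝ)) (𝓝 (1/2)) := by
    have h2 : Tendsto (fun x => ((Real.exp x - 1)/x * (Real.exp x)⁻¹ + 1)⁻¹)
        (𝓝[≠] (0:ℝ)) (𝓝 (1/2)) := by
      have hinv : Tendsto (fun x : ℝ => (Real.exp x)⁻¹) (𝓝[≠] (0:ℝ)) (𝓝 1) := by
        have : Tendsto (fun x : ℝ => (Real.exp x)⁻¹) (𝓝 (0:ℝ)) (𝓝 1) := by
          simpa using ((Real.continuous_exp.tendsto 0).inv₀ (by simp)).congr (fun x => rfl)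
        exact this.mono_left nhdsWithin_le_nhds
      have := ((tendsto_slope_exp.mul hinv).add_const 1).inv₀ (by norm_num)
      norm_num at this ⊢
      exact this
    apply h2.congr'
    filter_upwards [self_mem_nhdsWithin] with x hx
    have hx : x ≠ 0 := hx
    have hg := hg' x hx
    have hE := (Real.exp_pos x).ne'
    field_simp
  have := HasDerivAt.lhopital_zero_nhdsNE (f' := fun x => x * Real.exp x)
    (g' := fun x => (Real.exp x - 1) + x * Real.exp x)
    (Filter.Eventually.of_forall (fun x => hN x))
    (Filter.Eventually.of_forall (fun x => hDd x))
    (by filter_upwards [self_mem_nhdsWithin] with x hx; exact hg' x hx)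
    ?_ ?_ hdiv
  · apply this.congr'
    filter_upwards [self_mem_nhdsWithin] with x hx
    simp [shockSpeed, (show x ≠ 0 from hx)]
  · have hc : Continuous fun x : ℝ => x * Real.exp x - Real.exp x + 1 := by continuity
    have h := hc.tendsto 0
    norm_num at h
    exact h.mono_left nhdsWithin_le_nhds
  · have hc : Continuous fun x : ℝ => x * (Real.exp x - 1) := by continuity
    have h := hc.tendsto 0
    norm_num at h
    exact h.mono_left nhdsWithin_le_nhds

lemma shock_cont : Continuous shockSpeed := by
  rw [continuous_iff_continuousAt]
  intro θ
  by_cases hθ : θ = 0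
  · subst hθ
    rw [ContinuousAt, ← nhdsNE_sup_pure (0:ℝ), tendsto_sup]
    refine ⟨?_, tendsto_pure_nhds _ _⟩
    have h0 : shockSpeed 0 = 1/2 := by simp [shockSpeed]
    rw [h0]
    exact tendsto_shock_zero
  · exact (hasDerivAt_shock hθ).continuousAt

lemma shock_eq_form {θ : ℝ} (hθ : θ ≠ 0) :
    shockSpeed θ = 1 + (Real.exp θ - 1)⁻¹ - θ⁻¹ := by
  have h1 : Real.exp θ - 1 ≠ 0 := by
    intro h
    have := denom_pos hθ
    rw [h, mul_zero] at this
    exact lt_irrefl 0 this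
  rw [shockSpeed, if_neg hθ]
  field_simp
  ring

lemma shock_atTop : Tendsto shockSpeed atTop (𝓝 1) := by
  have hinv1 : Tendsto (fun θ : ℝ => (Real.exp θ - 1)⁻¹) atTop (𝓝 0) := by
    have h : Tendsto (fun θ : ℝ => Real.exp θ - 1) atTop atTop :=
      tendsto_atTop_add_const_right atTop (-1) Real.tendsto_exp_atTop |>.congr
        (fun x => by ring)
    exact tendsto_inv_atTop_zero.comp h
  have h := ((tendsto_const_nhds (x := (1:ℝ))).add hinv1).sub tendsto_inv_atTop_zero
  norm_num at h
  apply h.congr'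
  filter_upwards [eventually_gt_atTop (0:ℝ)] with θ hθ
  rw [shock_eq_form (ne_of_gt hθ)]

lemma shock_atBot : Tendsto shockSpeed atBot (𝓝 0) := by
  have hinv1 : Tendsto (fun θ : ℝ => (Real.exp θ - 1)⁻¹) atBot (𝓝 (-1)) := by
    have h : Tendsto (fun θ : ℝ => Real.exp θ - 1) atBot (𝓝 (-1)) := by
      have := Real.tendsto_exp_atBot.sub_const 1
      norm_num at this
      exact this
    have := h.inv₀ (by norm_num)
    norm_num at this
    exact this
  have hinv2 : Tendsto (fun θ : ℝ => θ⁻¹) atBot (𝓝 0) := by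
    have h2 : Tendsto (fun θ : ℝ => (-θ)⁻¹) atBot (𝓝 (0:ℝ)) :=
      tendsto_inv_atTop_zero.comp tendsto_neg_atBot_atTop
    have h3 := h2.neg
    rw [neg_zero] at h3
    exact h3.congr (fun x => by rw [← inv_neg, neg_neg])
  have h := ((tendsto_const_nhds (x := (1:ℝ))).add hinv1).sub hinv2
  norm_num at h
  apply h.congr'
  filter_upwards [eventually_lt_atBot (0:ℝ)] with θ hθ
  rw [shock_eq_form (ne_of_lt hθ)]

lemma shock_mono : StrictMono shockSpeed := by
  have m1 : StrictMonoOn shockSpeed (Ici 0) := by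
    apply strictMonoOn_of_deriv_pos (convex_Ici 0) shock_cont.continuousOn
    intro x hx
    rw [interior_Ici] at hx
    exact deriv_shock_pos (ne_of_gt hx)
  have m2 : StrictMonoOn shockSpeed (Iic 0) := by
    apply strictMonoOn_of_deriv_pos (convex_Iic 0) shock_cont.continuousOn
    intro x hx
    rw [interior_Iic] at hx
    exact deriv_shock_pos (ne_of_lt hx)
  intro a b hab
  rcases le_or_gt b 0 with hb | hb
  · exact m2 (le_of_lt (lt_of_lt_of_le hab hb)) hb hab
  · rcases le_or_gt 0 a with ha | ha
    · exact m1 ha (le_of_lt hb) hab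
    · calc shockSpeed a < shockSpeed 0 := m2 (le_of_lt ha) self_mem_Iic ha
        _ < shockSpeed b := m1 self_mem_Ici (le_of_lt hb) hb

private theorem stmt19_aux :
    Continuous shockSpeed ∧
    StrictMono shockSpeed ∧
    Filter.Tendsto shockSpeed Filter.atBot (𝓝 0) ∧
    Filter.Tendsto shockSpeed Filter.atTop (𝓝 1) ∧
    Set.BijOn shockSpeed Set.univ (Set.Ioo (0 : ℝ) 1) := by
  refine ⟨shock_cont, shock_mono, shock_atBot, shock_atTop, ?_, ?_, ?_⟩
  · intro θ _
    constructor
    · have h1 : shockSpeed (θ-1) < shockSpeed θ := shock_mono (by linarith)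
      have h0 : 0 ≤ shockSpeed (θ-1) := by
        apply le_of_tendsto shock_atBot
        filter_upwards [eventually_le_atBot (θ-1)] with t ht
        exact shock_mono.monotone ht
      linarith
    · have h1 : shockSpeed θ < shockSpeed (θ+1) := shock_mono (by linarith)
      have h0 : shockSpeed (θ+1) ≤ 1 := by
        apply ge_of_tendsto shock_atTop
        filter_upwards [eventually_ge_atTop (θ+1)] with t ht
        exact shock_mono.monotone ht
      linarith
  · exact shock_mono.injective.injOn
  · intro y hy
    obtain ⟨a, ha⟩ := (shock_atBot.eventually_lt_const hy.1).exists
    obtain ⟨b, hb⟩ := (shock_atTop.eventually_const_lt hy.2).exists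
    have hab : a ≤ b := (shock_mono.lt_iff_lt.mp (lt_trans ha hb)).le
    obtain ⟨x, _, hx⟩ := intermediate_value_Icc hab shock_cont.continuousOn ⟨ha.le, hb.le⟩
    exact ⟨x, trivial, hx⟩


/-- the shock-speed selection map `C` is continuous, strictly increasing,
tends to `0` at `−∞` and to `1` at `+∞`, and is a bijection from `ℝ` onto `(0,1)`. -/
theorem stmt19 :
    Continuous shockSpeed ∧
    StrictMono shockSpeed ∧
    Filter.Tendsto shockSpeed Filter.atBot (𝓝 0) ∧
    Filter.Tendsto shockSpeed Filter.atTop (𝓝 1) ∧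
    Set.BijOn shockSpeed Set.univ (Set.Ioo (0 : ℝ) 1) := stmt19_aux
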